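/- The two-variable function $f_2(x_1,x_2; n_1,n_2,a,\mu) = (1-\tanh^2 x_1)^{a+\frac{n_2}{2}+\frac14}\, C_{n_1}^{(n_2+\mu+\frac12)}(\tanh x_1)\, (1-\tanh^2 x_2)^{a}\, C_{n_2}^{(\mu)}(\tanh x_2)$ has two-dimensional Fourier transform $\mathcal{F}(f_2)(\xi_1,\xi_2) = \frac{2^{n_2+4a-\frac32}(2\mu)_{n_2}(2(n_2+\mu+\frac12))_{n_1}}{n_1!\, n_2!}\, \Theta_1(\xi_1)\, \Theta_2(\xi_2)$, where $\Theta_1(\xi_1) = B(a+\frac{n_2+i\xi_1}{2}+\frac14,\ a+\frac{n_2-i\xi_1}{2}+\frac14)\, {}_3F_2(-n_1,\ n_1+2(n_2+\mu+\frac12),\ a+\frac{n_2+i\xi_1}{2}+\frac14;\ n_2+2a+\frac12,\ n_2+\mu+1;\ 1)$ and $\Theta_2(\xi_2) = B(a+\frac{i\xi_2}{2},\ a-\frac{i\xi_2}{2})\, {}_3F_2(-n_2,\ n_2+2\mu,\ a+\frac{i\xi_2}{2};\ 2a,\ \mu+\frac12;\ 1)$. -/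

import Mathlib

open MeasureTheory Finset

noncomputable section

/-- Pochhammer symbol `(a)_n` for real `a`. -/
def pochR (a : ℝ) (n : ℕ) : ℝ := ∏ k ∈ Finset.range n, (a + k)

/-- Pochhammer symbol `(a)_n` for complex `a`. -/
def pochC (a : ℂ) (n : ℕ) : ℂ := ∏ k ∈ Finset.range n, (a + k)

/-- Gegenbauer polynomial `C_n^{(λ)}(x)` via the terminating `₂F₁` representation. -/
def Geg (n : ℕ) (lam : ℝ) (x : ℝ) : ℝ :=
  pochR (2 * lam) n / (Nat.factorial n) *
    ∑ l ∈ Finset.range (n + 1),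
      pochR (-(n : ℝ)) l * pochR ((n : ℝ) + 2 * lam) l /
        (pochR (lam + 1 / 2) l * (Nat.factorial l)) * ((1 - x) / 2) ^ l

/-- Terminating generalized hypergeometric sum `₃F₂(-n, a₂, a₃; b₁, b₂; 1)`. -/
def F32 (n : ℕ) (a2 a3 b1 b2 : ℂ) : ℂ :=
  ∑ l ∈ Finset.range (n + 1),
    pochC (-(n : ℂ)) l * pochC a2 l * pochC a3 l /
      (pochC b1 l * pochC b2 l * (Nat.factorial l))

/-- Beta function for complex arguments. -/
def BetaC (a b : ℂ) : ℂ := Complex.Gamma a * Complex.Gamma b / Complex.Gamma (a + b)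

/-- Continuous Hahn polynomial `p_n(x; a, b, c, d)`. -/
def hahn (n : ℕ) (x a b c d : ℂ) : ℂ :=
  Complex.I ^ n * pochC (a + c) n * pochC (a + d) n / (Nat.factorial n) *
    F32 n ((n : ℂ) + a + b + c + d - 1) (a + Complex.I * x) (a + c) (a + d)

open Set

lemma pochC_ofReal (r : ℝ) (n : ℕ) : ((pochR r n : ℝ) : ℂ) = pochC (r : ℂ) n := by
  simp only [pochR, pochC]
  push_cast
  rfl

lemma tanh_logform {v : ℝ} (hv0 : 0 < v) (hv1 : v < 1) :
    Real.tanh (Real.log ((1 - v) / v) / 2) = 1 - 2 * v := by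
  have h1v : 0 < 1 - v := by linarith
  set x := Real.log ((1 - v) / v) / 2 with hx
  have hE : (0:ℝ) < Real.exp x := Real.exp_pos x
  have hE2 : Real.exp x ^ 2 = (1 - v) / v := by
    rw [← Real.exp_nat_mul]
    have : (2:ℝ) * x = Real.log ((1 - v) / v) := by rw [hx]; ring
    rw [show ((2:ℕ):ℝ) * x = (2:ℝ) * x by norm_num, this,
      Real.exp_log (by positivity)]
  rw [Real.tanh_eq_sinh_div_cosh, Real.sinh_eq, Real.cosh_eq, Real.exp_neg]
  have hEne : Real.exp x ≠ 0 := hE.ne'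
  have h2 : Real.exp x ^ 2 * v = 1 - v := by
    rw [hE2]; field_simp
  have hden : Real.exp x + (Real.exp x)⁻¹ > 0 := by positivity
  field_simp
  nlinarith [h2]

def gsub (v : ℝ) : ℝ := Real.log ((1 - v) / v) / 2

lemma gsub_image : gsub '' Ioo 0 1 = univ := by
  ext x
  simp only [Set.mem_univ, iff_true, Set.mem_image, Set.mem_Ioo]
  refine ⟨1 / (1 + Real.exp (2 * x)), ⟨by positivity, ?_⟩, ?_⟩
  · rw [div_lt_one (by positivity)]
    have := Real.exp_pos (2 * x); linarith
  · have hE : (0:ℝ) < Real.exp (2 * x) := Real.exp_pos _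
    have h : (1 - 1 / (1 + Real.exp (2 * x))) / (1 / (1 + Real.exp (2 * x)))
        = Real.exp (2 * x) := by
      field_simp
      ring
    rw [gsub, h, Real.log_exp]; ring

lemma gsub_inj : InjOn gsub (Ioo 0 1) := by
  intro v₁ h₁ v₂ h₂ h
  simp only [Set.mem_Ioo] at h₁ h₂
  have e1 : (0:ℝ) < (1 - v₁) / v₁ := by
    apply div_pos (by linarith) h₁.1
  have e2 : (0:ℝ) < (1 - v₂) / v₂ := by
    apply div_pos (by linarith) h₂.1
  have : (1 - v₁) / v₁ = (1 - v₂) / v₂ := by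
    have hl : Real.log ((1 - v₁) / v₁) = Real.log ((1 - v₂) / v₂) := by
      have h' : Real.log ((1 - v₁) / v₁) / 2 = Real.log ((1 - v₂) / v₂) / 2 := h
      linarith
    calc (1 - v₁) / v₁ = Real.exp (Real.log ((1 - v₁) / v₁)) := (Real.exp_log e1).symm
    _ = Real.exp (Real.log ((1 - v₂) / v₂)) := by rw [hl]
    _ = (1 - v₂) / v₂ := Real.exp_log e2
  have hv1 := h₁.1.ne'
  have hv2 := h₂.1.ne'
  field_simp at this
  nlinarith [this]

lemma gsub_deriv {v : ℝ} (hv : v ∈ Ioo (0:ℝ) 1) :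
    HasDerivWithinAt gsub (-(1 / (2 * (v * (1 - v))))) (Ioo 0 1) v := by
  obtain ⟨hv0, hv1⟩ := hv
  have h1v : 0 < 1 - v := by linarith
  have hG : HasDerivAt (fun w => (Real.log (1 - w) - Real.log w) / 2)
      (-(1 / (2 * (v * (1 - v))))) v := by
    have hlog1 : HasDerivAt (fun w : ℝ => Real.log (1 - w)) (-(1 - v)⁻¹) v := by
      have h := (Real.hasDerivAt_log h1v.ne').comp v
        (((hasDerivAt_id v).const_sub 1 : HasDerivAt (fun w : ℝ => 1 - w) (-1) v))
      exact h.congr_deriv (by ring)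
    have hlog2 : HasDerivAt Real.log v⁻¹ v := Real.hasDerivAt_log hv0.ne'
    have := (hlog1.sub hlog2).div_const 2
    refine this.congr_deriv ?_
    field_simp
    ring
  have heq : (fun w => (Real.log (1 - w) - Real.log w) / 2) =ᶠ[nhds v] gsub := by
    filter_upwards [Ioo_mem_nhds hv0 hv1] with w hw
    obtain ⟨hw0, hw1⟩ := hw
    rw [gsub, Real.log_div (by linarith) hw0.ne']
  exact (hG.congr_of_eventuallyEq heq.symm).hasDerivWithinAt

lemma phase_eq (ξ : ℝ) {v : ℝ} (hv0 : 0 < v) (hv1 : v < 1) :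
    Complex.exp (-(Complex.I * ξ * (gsub v : ℝ))) =
      (v : ℂ) ^ (Complex.I * ξ / 2) * ((1 - v : ℝ) : ℂ) ^ (-(Complex.I * ξ / 2)) := by
  have h1v : (0:ℝ) < 1 - v := by linarith
  have hvne : (v : ℂ) ≠ 0 := Complex.ofReal_ne_zero.mpr hv0.ne'
  have h1vne : ((1 - v : ℝ) : ℂ) ≠ 0 := Complex.ofReal_ne_zero.mpr h1v.ne'
  rw [Complex.cpow_def_of_ne_zero hvne, Complex.cpow_def_of_ne_zero h1vne,
    ← Complex.exp_add, ← Complex.ofReal_log hv0.le, ← Complex.ofReal_log h1v.le]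
  congr 1
  have : gsub v = (Real.log (1 - v) - Real.log v) / 2 := by
    rw [gsub, Real.log_div h1v.ne' hv0.ne']
  rw [this]
  push_cast
  ring

lemma real_pow_identity (p : ℝ) (l : ℕ) {v : ℝ} (hv0 : 0 < v) (hv1 : v < 1) :
    (1 / (2 * (v * (1 - v)))) * ((4 * (v * (1 - v))) ^ p * v ^ l)
      = (2:ℝ) ^ (2 * p - 1) * (v ^ (p + l - 1) * (1 - v) ^ (p - 1)) := by
  have h1v : (0:ℝ) < 1 - v := by linarith
  have e1 : ((4:ℝ) * (v * (1 - v))) ^ p = (2:ℝ) ^ (2 * p) * v ^ p * (1 - v) ^ p := by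
    rw [show (4:ℝ) * (v * (1 - v)) = 4 * v * (1 - v) by ring,
      Real.mul_rpow (by positivity) h1v.le, Real.mul_rpow (by norm_num) hv0.le]
    have h4 : (4:ℝ) ^ p = (2:ℝ) ^ (2 * p) := by
      have h2 : ((2:ℝ) ^ (2:ℝ)) = 4 := by
        have := Real.rpow_natCast (2:ℝ) 2
        norm_num at this
        linarith
      rw [← h2, ← Real.rpow_mul (by norm_num : (0:ℝ) ≤ 2)]
    rw [h4]
  have e2 : v ^ (p + (l:ℝ) - 1) = v ^ p * v ^ l / v := by
    rw [show p + (l:ℝ) - 1 = p + (l:ℝ) + (-1) by ring, Real.rpow_add hv0,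
      Real.rpow_add hv0, Real.rpow_natCast, Real.rpow_neg_one]
    ring
  have e3 : (1 - v) ^ (p - 1) = (1 - v) ^ p / (1 - v) := by
    rw [show p - 1 = p + (-1) by ring, Real.rpow_add h1v, Real.rpow_neg_one]
    ring
  have e4 : (2:ℝ) ^ (2 * p - 1) = (2:ℝ) ^ (2 * p) / 2 := by
    rw [show 2 * p - 1 = 2 * p + (-1) by ring, Real.rpow_add (by norm_num : (0:ℝ) < 2),
      Real.rpow_neg_one]
    ring
  rw [e1, e2, e3, e4]
  field_simp

lemma pointwise_eq (p : ℝ) (l : ℕ) (ξ : ℝ) {v : ℝ} (hv : v ∈ Ioo (0:ℝ) 1) :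
    |(-(1 / (2 * (v * (1 - v)))))| •
      (Complex.exp (-(Complex.I * ξ * (gsub v : ℝ))) *
        (((1 - Real.tanh (gsub v) ^ 2) ^ p * ((1 - Real.tanh (gsub v)) / 2) ^ l : ℝ) : ℂ))
    = (((2:ℝ) ^ (2 * p - 1) : ℝ) : ℂ) *
        ((v : ℂ) ^ ((p : ℂ) + l + Complex.I * ξ / 2 - 1) *
          (1 - (v : ℂ)) ^ ((p : ℂ) - Complex.I * ξ / 2 - 1)) := by
  obtain ⟨hv0, hv1⟩ := hv
  have h1v : (0:ℝ) < 1 - v := by linarith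
  have hvne : (v : ℂ) ≠ 0 := Complex.ofReal_ne_zero.mpr hv0.ne'
  have h1vne : ((1 - v : ℝ) : ℂ) ≠ 0 := Complex.ofReal_ne_zero.mpr h1v.ne'
  have habs : |(-(1 / (2 * (v * (1 - v)))))| = 1 / (2 * (v * (1 - v))) := by
    rw [abs_neg, abs_of_pos (by positivity)]
  have htanh : Real.tanh (gsub v) = 1 - 2 * v := tanh_logform hv0 hv1
  have ht1 : 1 - Real.tanh (gsub v) ^ 2 = 4 * (v * (1 - v)) := by rw [htanh]; ring
  have ht2 : (1 - Real.tanh (gsub v)) / 2 = v := by rw [htanh]; ring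
  -- split the complex powers
  have hs1 : (v : ℂ) ^ ((p : ℂ) + l + Complex.I * ξ / 2 - 1)
      = ((v ^ (p + l - 1) : ℝ) : ℂ) * (v : ℂ) ^ (Complex.I * ξ / 2) := by
    rw [show (p : ℂ) + l + Complex.I * ξ / 2 - 1
        = ((p + l - 1 : ℝ) : ℂ) + Complex.I * ξ / 2 by push_cast; ring,
      Complex.cpow_add _ _ hvne, Complex.ofReal_cpow hv0.le]
  have hs2 : (1 - (v : ℂ)) ^ ((p : ℂ) - Complex.I * ξ / 2 - 1)
      = (((1 - v) ^ (p - 1) : ℝ) : ℂ) * ((1 - v : ℝ) : ℂ) ^ (-(Complex.I * ξ / 2)) := by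
    rw [show (1 : ℂ) - (v : ℂ) = ((1 - v : ℝ) : ℂ) by push_cast; ring,
      show (p : ℂ) - Complex.I * ξ / 2 - 1
        = ((p - 1 : ℝ) : ℂ) + (-(Complex.I * ξ / 2)) by push_cast; ring,
      Complex.cpow_add _ _ h1vne, Complex.ofReal_cpow h1v.le]
  rw [habs, phase_eq ξ hv0 hv1, ht1, ht2, hs1, hs2, Complex.real_smul]
  have hC := congrArg (Complex.ofReal) (real_pow_identity p l hv0 hv1)
  simp only [Complex.ofReal_mul] at hC
  simp only [Complex.ofReal_mul]
  linear_combination ((v:ℂ) ^ (Complex.I * ξ / 2) * ((1 - v : ℝ) : ℂ) ^ (-(Complex.I * ξ / 2))) * hC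

lemma core_int (p : ℝ) (hp : 0 < p) (l : ℕ) (ξ : ℝ) :
    (Integrable fun x : ℝ => Complex.exp (-(Complex.I * ξ * x)) *
        (((1 - Real.tanh x ^ 2) ^ p * ((1 - Real.tanh x) / 2) ^ l : ℝ) : ℂ)) ∧
    (∫ x : ℝ, Complex.exp (-(Complex.I * ξ * x)) *
        (((1 - Real.tanh x ^ 2) ^ p * ((1 - Real.tanh x) / 2) ^ l : ℝ) : ℂ))
      = (((2:ℝ) ^ (2 * p - 1) : ℝ) : ℂ) *
          Complex.betaIntegral ((p : ℂ) + l + Complex.I * ξ / 2)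
            ((p : ℂ) - Complex.I * ξ / 2) := by
  set F : ℝ → ℂ := fun x => Complex.exp (-(Complex.I * ξ * x)) *
      (((1 - Real.tanh x ^ 2) ^ p * ((1 - Real.tanh x) / 2) ^ l : ℝ) : ℂ) with hF
  set s : ℂ := (p : ℂ) + l + Complex.I * ξ / 2 with hsdef
  set w : ℂ := (p : ℂ) - Complex.I * ξ / 2 with hwdef
  have hs : 0 < s.re := by
    simp [hsdef, Complex.add_re, Complex.ofReal_re]
    positivity
  have hw : 0 < w.re := by
    simp [hwdef, Complex.sub_re, Complex.ofReal_re]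
    positivity
  set G : ℝ → ℂ := fun v => (v : ℂ) ^ (s - 1) * (1 - (v : ℂ)) ^ (w - 1) with hG
  have hderiv : ∀ v ∈ Ioo (0:ℝ) 1,
      HasDerivWithinAt gsub (-(1 / (2 * (v * (1 - v))))) (Ioo 0 1) v :=
    fun v hv => gsub_deriv hv
  have hpt : ∀ v ∈ Ioo (0:ℝ) 1,
      |(-(1 / (2 * (v * (1 - v)))))| • F (gsub v)
        = (((2:ℝ) ^ (2 * p - 1) : ℝ) : ℂ) * G v := fun v hv => pointwise_eq p l ξ hv
  -- integrability of G on Ioo 0 1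
  have hGint : IntegrableOn G (Ioo (0:ℝ) 1) := by
    have := (intervalIntegrable_iff_integrableOn_Ioc_of_le (zero_le_one)).mp
      (Complex.betaIntegral_convergent hs hw)
    exact this.mono_set Ioo_subset_Ioc_self
  -- integrability of F
  have hFint : Integrable F := by
    have hiff := integrableOn_image_iff_integrableOn_abs_deriv_smul
      measurableSet_Ioo hderiv gsub_inj F
    rw [gsub_image] at hiff
    rw [← integrableOn_univ]
    rw [hiff]
    exact IntegrableOn.congr_fun (hGint.const_mul _)
      (fun v hv => (hpt v hv).symm) measurableSet_Ioo
  refine ⟨hFint, ?_⟩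
  have key := integral_image_eq_integral_abs_deriv_smul measurableSet_Ioo hderiv gsub_inj F
  rw [gsub_image, setIntegral_univ] at key
  rw [key, setIntegral_congr_fun measurableSet_Ioo hpt, integral_const_mul]
  congr 1
  rw [Complex.betaIntegral, intervalIntegral.integral_of_le zero_le_one,
    integral_Ioc_eq_integral_Ioo]

lemma pochC_succ (z : ℂ) (n : ℕ) : pochC z (n + 1) = pochC z n * (z + n) := by
  rw [pochC, Finset.prod_range_succ]; rfl

lemma Gamma_add_nat {z : ℂ} (hz : 0 < z.re) (n : ℕ) :
    Complex.Gamma (z + n) = pochC z n * Complex.Gamma z := by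
  induction n with
  | zero => simp [pochC]
  | succ n ih =>
    have hne : z + n ≠ 0 := by
      intro h
      have : (z + n).re = 0 := by rw [h]; simp
      simp only [Complex.add_re, Complex.natCast_re] at this
      have : (0:ℝ) ≤ (n:ℝ) := Nat.cast_nonneg n
      linarith [hz, ‹(z + ↑n).re = 0›]
    have : z + (n + 1 : ℕ) = (z + n) + 1 := by push_cast; ring
    rw [this, Complex.Gamma_add_one _ hne, ih, pochC_succ]
    ring

lemma pochC_ne_zero {z : ℂ} (hz : 0 < z.re) (n : ℕ) : pochC z n ≠ 0 := by
  rw [pochC]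
  apply Finset.prod_ne_zero_iff.mpr
  intro k _
  intro h
  have : (z + k).re = 0 := by rw [h]; simp
  simp only [Complex.add_re, Complex.natCast_re] at this
  have : (0:ℝ) ≤ (k:ℝ) := Nat.cast_nonneg k
  linarith [hz, ‹(z + ↑k).re = 0›]

lemma betaIntegral_shift {α β : ℂ} (hα : 0 < α.re) (hβ : 0 < β.re) (l : ℕ) :
    Complex.betaIntegral (α + l) β
      = BetaC α β * pochC α l / pochC (α + β) l := by
  have hαl : 0 < (α + l).re := by
    simp only [Complex.add_re, Complex.natCast_re]
    have : (0:ℝ) ≤ (l:ℝ) := Nat.cast_nonneg l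
    linarith
  have hmul := Complex.Gamma_mul_Gamma_eq_betaIntegral hαl hβ
  have hΓsum_ne : Complex.Gamma (α + β) ≠ 0 := by
    apply Complex.Gamma_ne_zero
    intro m h
    have : (α + β).re = (-(m:ℂ)).re := by rw [h]
    simp only [Complex.add_re, Complex.neg_re, Complex.natCast_re] at this
    have : (0:ℝ) ≤ (m:ℝ) := Nat.cast_nonneg m
    linarith [hα, hβ, ‹(α+β).re = _›]
  have hsum : 0 < (α + β).re := by simp only [Complex.add_re]; linarith
  have h1 : Complex.Gamma (α + l + β) = pochC (α + β) l * Complex.Gamma (α + β) := by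
    rw [show α + l + β = (α + β) + l by ring, Gamma_add_nat hsum]
  have h2 : Complex.Gamma (α + l) = pochC α l * Complex.Gamma α := Gamma_add_nat hα l
  have hΓl_ne : Complex.Gamma (α + l + β) ≠ 0 := by
    rw [h1]
    exact mul_ne_zero (pochC_ne_zero hsum l) hΓsum_ne
  rw [h1, h2] at hmul
  rw [BetaC]
  field_simp
  rw [eq_div_iff (pochC_ne_zero hsum l)]
  linear_combination -hmul

lemma oneD (p lam : ℝ) (hp : 0 < p) (n : ℕ) (ξ : ℝ) :
    (Integrable fun x : ℝ => Complex.exp (-(Complex.I * ξ * x)) *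
        (((1 - Real.tanh x ^ 2) ^ p * Geg n lam (Real.tanh x) : ℝ) : ℂ)) ∧
    (∫ x : ℝ, Complex.exp (-(Complex.I * ξ * x)) *
        (((1 - Real.tanh x ^ 2) ^ p * Geg n lam (Real.tanh x) : ℝ) : ℂ))
      = (((2:ℝ) ^ (2 * p - 1) * (pochR (2 * lam) n / (Nat.factorial n)) : ℝ) : ℂ) *
          BetaC ((p:ℂ) + Complex.I * ξ / 2) ((p:ℂ) - Complex.I * ξ / 2) *
          F32 n ((n:ℂ) + 2 * lam) ((p:ℂ) + Complex.I * ξ / 2) (2 * (p:ℂ))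
            ((lam:ℂ) + 1 / 2) := by
  set α : ℂ := (p:ℂ) + Complex.I * ξ / 2 with hα
  set β : ℂ := (p:ℂ) - Complex.I * ξ / 2 with hβ
  have hαre : 0 < α.re := by
    simp [hα, Complex.add_re, Complex.ofReal_re]; positivity
  have hβre : 0 < β.re := by
    simp [hβ, Complex.sub_re, Complex.ofReal_re]; positivity
  set c : ℕ → ℝ := fun l => pochR (-(n : ℝ)) l * pochR ((n : ℝ) + 2 * lam) l /
      (pochR (lam + 1 / 2) l * (Nat.factorial l)) with hc
  set K : ℝ := pochR (2 * lam) n / (Nat.factorial n) with hK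
  set Fl : ℕ → ℝ → ℂ := fun l x => Complex.exp (-(Complex.I * ξ * x)) *
      (((1 - Real.tanh x ^ 2) ^ p * ((1 - Real.tanh x) / 2) ^ l : ℝ) : ℂ) with hFl
  have hexp : ∀ x : ℝ, Complex.exp (-(Complex.I * ξ * x)) *
      (((1 - Real.tanh x ^ 2) ^ p * Geg n lam (Real.tanh x) : ℝ) : ℂ)
      = ∑ l ∈ Finset.range (n + 1), ((K * c l : ℝ) : ℂ) * Fl l x := by
    intro x
    have hg : (1 - Real.tanh x ^ 2) ^ p * Geg n lam (Real.tanh x)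
        = ∑ l ∈ Finset.range (n + 1),
            (K * c l) * ((1 - Real.tanh x ^ 2) ^ p * ((1 - Real.tanh x) / 2) ^ l) := by
      rw [Geg, Finset.mul_sum, Finset.mul_sum]
      exact Finset.sum_congr rfl fun l _ => by simp only [hc, hK]; ring
    rw [hg, Complex.ofReal_sum, Finset.mul_sum]
    exact Finset.sum_congr rfl fun l _ => by
      simp only [hFl, Complex.ofReal_mul]; ring
  constructor
  · rw [show (fun x : ℝ => Complex.exp (-(Complex.I * ξ * x)) *
        (((1 - Real.tanh x ^ 2) ^ p * Geg n lam (Real.tanh x) : ℝ) : ℂ))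
        = fun x => ∑ l ∈ Finset.range (n + 1), ((K * c l : ℝ) : ℂ) * Fl l x
        from funext hexp]
    exact integrable_finset_sum _ (fun l _ => ((core_int p hp l ξ).1.const_mul _))
  · rw [show (fun x : ℝ => Complex.exp (-(Complex.I * ξ * x)) *
        (((1 - Real.tanh x ^ 2) ^ p * Geg n lam (Real.tanh x) : ℝ) : ℂ))
        = fun x => ∑ l ∈ Finset.range (n + 1), ((K * c l : ℝ) : ℂ) * Fl l x
        from funext hexp]
    rw [integral_finset_sum _ (fun l _ => ((core_int p hp l ξ).1.const_mul _))]
    have hval : ∀ l : ℕ, (∫ x : ℝ, Fl l x)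
        = (((2:ℝ) ^ (2 * p - 1) : ℝ) : ℂ) *
            (BetaC α β * pochC α l / pochC (2 * (p:ℂ)) l) := by
      intro l
      have h2 := (core_int p hp l ξ).2
      have harg : (p : ℂ) + l + Complex.I * ξ / 2 = α + l := by rw [hα]; ring
      simp only [hFl]
      rw [h2, harg, betaIntegral_shift hαre hβre l,
        show α + β = 2 * (p:ℂ) by rw [hα, hβ]; ring]
    simp only [hFl] at hval
    simp only [integral_const_mul, hval]
    rw [F32, Finset.mul_sum]
    apply Finset.sum_congr rfl
    intro l _
    have e1 : ((pochR (-(n:ℝ)) l : ℝ) : ℂ) = pochC (-(n:ℂ)) l := by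
      rw [pochC_ofReal]; norm_cast
    have e2 : ((pochR ((n:ℝ) + 2 * lam) l : ℝ) : ℂ) = pochC ((n:ℂ) + 2 * lam) l := by
      rw [pochC_ofReal]; norm_cast
    have e3 : ((pochR (lam + 1/2) l : ℝ) : ℂ) = pochC ((lam:ℂ) + 1/2) l := by
      rw [pochC_ofReal]; congr 1; push_cast; ring
    simp only [hc, hK]
    push_cast [← e1, ← e2, ← e3]
    ring


theorem stmt_13 (a μ : ℝ) (ha : 0 < a) (hμ : -1/2 < μ) (n₁ n₂ : ℕ) (ξ₁ ξ₂ : ℝ) :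
    ∫ x₁ : ℝ, ∫ x₂ : ℝ,
        Complex.exp (-(Complex.I * ((ξ₁ : ℂ) * (x₁ : ℂ) + (ξ₂ : ℂ) * (x₂ : ℂ)))) *
          (((1 - Real.tanh x₁ ^ 2) ^ (a + (n₂ : ℝ) / 2 + 1/4) *
              Geg n₁ ((n₂ : ℝ) + μ + 1/2) (Real.tanh x₁) *
              (1 - Real.tanh x₂ ^ 2) ^ a * Geg n₂ μ (Real.tanh x₂) : ℝ) : ℂ)
      = ((((2 : ℝ) ^ ((n₂ : ℝ) + 4 * a - 3/2)) * pochR (2 * μ) n₂ *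
            pochR (2 * ((n₂ : ℝ) + μ + 1/2)) n₁ /
            ((Nat.factorial n₁) * (Nat.factorial n₂)) : ℝ) : ℂ) *
        (BetaC ((a : ℂ) + ((n₂ : ℂ) + Complex.I * (ξ₁ : ℂ)) / 2 + 1/4)
            ((a : ℂ) + ((n₂ : ℂ) - Complex.I * (ξ₁ : ℂ)) / 2 + 1/4) *
          F32 n₁ ((n₁ : ℂ) + 2 * ((n₂ : ℂ) + (μ : ℂ) + 1/2))
            ((a : ℂ) + ((n₂ : ℂ) + Complex.I * (ξ₁ : ℂ)) / 2 + 1/4)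
            ((n₂ : ℂ) + 2 * (a : ℂ) + 1/2) ((n₂ : ℂ) + (μ : ℂ) + 1)) *
        (BetaC ((a : ℂ) + Complex.I * (ξ₂ : ℂ) / 2) ((a : ℂ) - Complex.I * (ξ₂ : ℂ) / 2) *
          F32 n₂ ((n₂ : ℂ) + 2 * (μ : ℂ)) ((a : ℂ) + Complex.I * (ξ₂ : ℂ) / 2)
            (2 * (a : ℂ)) ((μ : ℂ) + 1/2)) := by
  set p₁ : ℝ := a + (n₂ : ℝ) / 2 + 1/4 with hp₁def
  set lam₁ : ℝ := (n₂ : ℝ) + μ + 1/2 with hlam₁def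
  have hp₁ : 0 < p₁ := by rw [hp₁def]; positivity
  set A : ℝ → ℂ := fun x => Complex.exp (-(Complex.I * ξ₁ * x)) *
      (((1 - Real.tanh x ^ 2) ^ p₁ * Geg n₁ lam₁ (Real.tanh x) : ℝ) : ℂ) with hA
  set B : ℝ → ℂ := fun x => Complex.exp (-(Complex.I * ξ₂ * x)) *
      (((1 - Real.tanh x ^ 2) ^ a * Geg n₂ μ (Real.tanh x) : ℝ) : ℂ) with hB
  have hsplit : ∀ x₁ x₂ : ℝ,
      Complex.exp (-(Complex.I * ((ξ₁ : ℂ) * (x₁ : ℂ) + (ξ₂ : ℂ) * (x₂ : ℂ)))) *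
        (((1 - Real.tanh x₁ ^ 2) ^ p₁ * Geg n₁ lam₁ (Real.tanh x₁) *
            (1 - Real.tanh x₂ ^ 2) ^ a * Geg n₂ μ (Real.tanh x₂) : ℝ) : ℂ)
      = A x₁ * B x₂ := by
    intro x₁ x₂
    simp only [hA, hB]
    rw [show -(Complex.I * ((ξ₁ : ℂ) * (x₁ : ℂ) + (ξ₂ : ℂ) * (x₂ : ℂ)))
        = -(Complex.I * ξ₁ * x₁) + -(Complex.I * ξ₂ * x₂) by ring, Complex.exp_add]
    push_cast
    ring
  have hstep : (∫ x₁ : ℝ, ∫ x₂ : ℝ,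
      Complex.exp (-(Complex.I * ((ξ₁ : ℂ) * (x₁ : ℂ) + (ξ₂ : ℂ) * (x₂ : ℂ)))) *
        (((1 - Real.tanh x₁ ^ 2) ^ p₁ * Geg n₁ lam₁ (Real.tanh x₁) *
            (1 - Real.tanh x₂ ^ 2) ^ a * Geg n₂ μ (Real.tanh x₂) : ℝ) : ℂ))
      = (∫ x : ℝ, A x) * (∫ x : ℝ, B x) := by
    have : ∀ x₁ : ℝ, (∫ x₂ : ℝ,
        Complex.exp (-(Complex.I * ((ξ₁ : ℂ) * (x₁ : ℂ) + (ξ₂ : ℂ) * (x₂ : ℂ)))) *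
          (((1 - Real.tanh x₁ ^ 2) ^ p₁ * Geg n₁ lam₁ (Real.tanh x₁) *
              (1 - Real.tanh x₂ ^ 2) ^ a * Geg n₂ μ (Real.tanh x₂) : ℝ) : ℂ))
        = A x₁ * ∫ x : ℝ, B x := by
      intro x₁
      rw [show (fun x₂ : ℝ =>
          Complex.exp (-(Complex.I * ((ξ₁ : ℂ) * (x₁ : ℂ) + (ξ₂ : ℂ) * (x₂ : ℂ)))) *
            (((1 - Real.tanh x₁ ^ 2) ^ p₁ * Geg n₁ lam₁ (Real.tanh x₁) *
                (1 - Real.tanh x₂ ^ 2) ^ a * Geg n₂ μ (Real.tanh x₂) : ℝ) : ℂ))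
          = fun x₂ => A x₁ * B x₂ from funext (fun x₂ => hsplit x₁ x₂)]
      exact integral_const_mul _ _
    simp only [this]
    exact integral_mul_const _ _
  rw [hstep, (oneD p₁ lam₁ hp₁ n₁ ξ₁).2, (oneD a μ ha n₂ ξ₂).2]
  -- align complex arguments
  have A1 : ((p₁ : ℝ) : ℂ) + Complex.I * ξ₁ / 2
      = (a : ℂ) + ((n₂ : ℂ) + Complex.I * (ξ₁ : ℂ)) / 2 + 1/4 := by
    rw [hp₁def]; push_cast; ring
  have A2 : ((p₁ : ℝ) : ℂ) - Complex.I * ξ₁ / 2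
      = (a : ℂ) + ((n₂ : ℂ) - Complex.I * (ξ₁ : ℂ)) / 2 + 1/4 := by
    rw [hp₁def]; push_cast; ring
  have A3 : ((n₁ : ℂ) + 2 * ((lam₁ : ℝ) : ℂ))
      = (n₁ : ℂ) + 2 * ((n₂ : ℂ) + (μ : ℂ) + 1/2) := by
    rw [hlam₁def]; push_cast; ring
  have A4 : 2 * ((p₁ : ℝ) : ℂ) = (n₂ : ℂ) + 2 * (a : ℂ) + 1/2 := by
    rw [hp₁def]; push_cast; ring
  have A5 : ((lam₁ : ℝ) : ℂ) + 1/2 = (n₂ : ℂ) + (μ : ℂ) + 1 := by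
    rw [hlam₁def]; push_cast; ring
  rw [A1, A2, A3, A4, A5]
  -- combine constants
  have hc : (((2:ℝ) ^ (2 * p₁ - 1) * (pochR (2 * lam₁) n₁ / (Nat.factorial n₁)) : ℝ) : ℂ) *
      (((2:ℝ) ^ (2 * a - 1) * (pochR (2 * μ) n₂ / (Nat.factorial n₂)) : ℝ) : ℂ)
      = ((((2 : ℝ) ^ ((n₂ : ℝ) + 4 * a - 3/2)) * pochR (2 * μ) n₂ *
            pochR (2 * ((n₂ : ℝ) + μ + 1/2)) n₁ /
            ((Nat.factorial n₁) * (Nat.factorial n₂)) : ℝ) : ℂ) := by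
    rw [← Complex.ofReal_mul]
    congr 1
    have h2 : (2:ℝ) ^ (2 * p₁ - 1) * (2:ℝ) ^ (2 * a - 1)
        = (2:ℝ) ^ ((n₂ : ℝ) + 4 * a - 3/2) := by
      rw [← Real.rpow_add (by norm_num : (0:ℝ) < 2)]
      congr 1
      rw [hp₁def]; ring
    linear_combination (pochR (2 * lam₁) n₁ * pochR (2 * μ) n₂ /
      ((Nat.factorial n₁ : ℝ) * (Nat.factorial n₂ : ℝ))) * h2
  linear_combination
    (BetaC ((a : ℂ) + ((n₂ : ℂ) + Complex.I * (ξ₁ : ℂ)) / 2 + 1/4)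
        ((a : ℂ) + ((n₂ : ℂ) - Complex.I * (ξ₁ : ℂ)) / 2 + 1/4) *
      F32 n₁ ((n₁ : ℂ) + 2 * ((n₂ : ℂ) + (μ : ℂ) + 1/2))
        ((a : ℂ) + ((n₂ : ℂ) + Complex.I * (ξ₁ : ℂ)) / 2 + 1/4)
        ((n₂ : ℂ) + 2 * (a : ℂ) + 1/2) ((n₂ : ℂ) + (μ : ℂ) + 1) *
      (BetaC ((a : ℂ) + Complex.I * (ξ₂ : ℂ) / 2) ((a : ℂ) - Complex.I * (ξ₂ : ℂ) / 2) *
        F32 n₂ ((n₂ : ℂ) + 2 * (μ : ℂ)) ((a : ℂ) + Complex.I * (ξ₂ : ℂ) / 2)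
          (2 * (a : ℂ)) ((μ : ℂ) + 1/2))) * hc
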